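/- Let (X, D) be a metric space of diameter at most 1, μ : X → ℝ a 1-Lipschitz function, and x* ∈ X with μ(x*) ≥ μ(x) for all x ∈ X; write μ* = μ(x*) and Δ_x = μ* − μ(x). Let ε_m = 2^{−m}. Suppose sets C₁, C₂, … ⊆ X, finite nonempty sets A₁, A₂, … and estimates μ̂_m : A_m → ℝ satisfy, for every m ≥ 1: (i) C₁ = X; (ii) A_m ⊆ C_m is an ε_m-covering of C_m; (iii) |μ̂_m(x) − μ(x)| ≤ ε_m for all x ∈ A_m; (iv) A_m⁺ = {x ∈ A_m : μ̂_m(x) ≥ max_{y∈A_m} μ̂_m(y) − 3ε_m}; and (v) C_{m+1} = ⋃_{x ∈ A_m⁺} B(x, ε_m). Then x* ∈ C_m for every m ≥ 1, and for every m ≥ 1 and every x ∈ A_m, Δ_x ≤ 7·ε_{m−1} (with ε₀ = 1). -/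
import Mathlib


open Metric Set

/-- Q-LAE under the clean event: with `ε_m = 2^{−m}`, active
regions `C_m`, coverings `A_m`, estimates `μ̂_m` within `ε_m`, elimination sets
`A_m⁺` and refinement `C_{m+1} = ⋃_{x ∈ A_m⁺} B(x, ε_m)`, the optimal arm
`x*` stays in every `C_m`, and every `x ∈ A_m` has optimality gap
`Δ_x ≤ 7·ε_{m−1}` (with `ε₀ = 1`). -/
theorem qlae_clean_event {X : Type*} [MetricSpace X]
    (hdiam : Metric.diam (Set.univ : Set X) ≤ 1)
    (μ : X → ℝ) (hμ : LipschitzWith 1 μ)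
    (xstar : X) (hmax : ∀ x, μ x ≤ μ xstar)
    (C : ℕ → Set X) (A Aplus : ℕ → Finset X) (μhat : ℕ → X → ℝ)
    (hAne : ∀ m, 1 ≤ m → (A m).Nonempty)
    (hC1 : C 1 = Set.univ)
    (hAsub : ∀ m, 1 ≤ m → (A m : Set X) ⊆ C m)
    (hAcov : ∀ m, 1 ≤ m → C m ⊆ ⋃ x ∈ A m, Metric.closedBall x ((1 / 2 : ℝ) ^ m))
    (hest : ∀ m, 1 ≤ m → ∀ x ∈ A m, |μhat m x - μ x| ≤ (1 / 2 : ℝ) ^ m)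
    (hAplus : ∀ m, ∀ hm : 1 ≤ m, (Aplus m : Set X) =
      {y ∈ (A m : Set X) |
        (A m).sup' (hAne m hm) (μhat m) - 3 * (1 / 2 : ℝ) ^ m ≤ μhat m y})
    (hCnext : ∀ m, 1 ≤ m →
      C (m + 1) = ⋃ x ∈ (Aplus m : Set X), Metric.closedBall x ((1 / 2 : ℝ) ^ m)) :
    (∀ m, 1 ≤ m → xstar ∈ C m) ∧
    (∀ m, 1 ≤ m → ∀ x ∈ A m, μ xstar - μ x ≤ 7 * (1 / 2 : ℝ) ^ (m - 1)) := by
  have hlip : ∀ a b : X, μ a - μ b ≤ dist a b := by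
    intro a b
    have h := hμ.dist_le_mul a b
    rw [Real.dist_eq] at h
    norm_num at h
    exact (abs_le.mp h).2
  -- for each m ≥ 1, a point of A m near xstar, given xstar ∈ C m
  have hnear : ∀ m, 1 ≤ m → xstar ∈ C m →
      ∃ y ∈ A m, dist xstar y ≤ (1 / 2 : ℝ) ^ m := by
    intro m hm hx
    have := hAcov m hm hx
    simp only [Set.mem_iUnion, Metric.mem_closedBall] at this
    obtain ⟨y, hy, hd⟩ := this
    exact ⟨y, hy, hd⟩
  -- sup' bound
  have hsup_le : ∀ m, ∀ hm : 1 ≤ m,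
      (A m).sup' (hAne m hm) (μhat m) ≤ μ xstar + (1 / 2 : ℝ) ^ m := by
    intro m hm
    obtain ⟨z, hz, hzsup⟩ := Finset.exists_mem_eq_sup' (hAne m hm) (μhat m)
    rw [hzsup]
    have h1 := (abs_le.mp (hest m hm z hz)).2
    have h2 := hmax z
    linarith
  -- main invariant
  have hstar : ∀ m, 1 ≤ m → xstar ∈ C m := by
    intro m hm
    induction m, hm using Nat.le_induction with
    | base => rw [hC1]; exact Set.mem_univ _
    | succ m hm ih =>
        obtain ⟨y, hy, hd⟩ := hnear m hm ih
        have hy' : y ∈ Aplus m := by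
          have hmem : y ∈ {w ∈ (A m : Set X) |
              (A m).sup' (hAne m hm) (μhat m) - 3 * (1 / 2 : ℝ) ^ m ≤ μhat m w} := by
            refine ⟨hy, ?_⟩
            have h1 := (abs_le.mp (hest m hm y hy)).1
            have h2 := hlip xstar y
            have h3 := hsup_le m hm
            linarith
          rw [← hAplus m hm] at hmem
          exact_mod_cast hmem
        rw [hCnext m hm]
        simp only [Set.mem_iUnion, Metric.mem_closedBall]
        exact ⟨y, hy', hd⟩
  refine ⟨hstar, ?_⟩
  intro m hm x hx
  rcases Nat.lt_or_ge m 2 with h2 | h2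
  · -- m = 1
    interval_cases m
    have hbdd : Bornology.IsBounded (Set.univ : Set X) := by
      have hsub := hAcov 1 le_rfl
      rw [hC1] at hsub
      exact ((Bornology.isBounded_biUnion (Finset.finite_toSet (A 1))).2
        (fun i _ => Metric.isBounded_closedBall)).subset hsub
    have hd : dist xstar x ≤ 1 :=
      (Metric.dist_le_diam_of_mem hbdd (Set.mem_univ _) (Set.mem_univ _)).trans hdiam
    have := hlip xstar x
    norm_num
    linarith
  · -- m ≥ 2, write m = k + 1
    obtain ⟨k, rfl⟩ : ∃ k, m = k + 1 := ⟨m - 1, (Nat.succ_pred_eq_of_pos (by omega)).symm⟩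
    have hk : 1 ≤ k := by omega
    have hxC : x ∈ C (k + 1) := hAsub (k + 1) hm hx
    rw [hCnext k hk] at hxC
    simp only [Set.mem_iUnion, Metric.mem_closedBall] at hxC
    obtain ⟨z, hz, hdz⟩ := hxC
    have hzA : z ∈ A k ∧ (A k).sup' (hAne k hk) (μhat k) - 3 * (1 / 2 : ℝ) ^ k ≤ μhat k z := by
      have : z ∈ (Aplus k : Set X) := hz
      rw [hAplus k hk] at this
      exact ⟨this.1, this.2⟩
    obtain ⟨y, hy, hdy⟩ := hnear k hk (hstar k hk)
    have hsupy : μhat k y ≤ (A k).sup' (hAne k hk) (μhat k) := Finset.le_sup' _ hy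
    have h1 := (abs_le.mp (hest k hk y hy)).1
    have h2 := (abs_le.mp (hest k hk z hzA.1)).2
    have h3 := hlip xstar y
    have h4 := hlip z x
    rw [dist_comm] at hdz
    have : (k + 1 : ℕ) - 1 = k := by omega
    rw [this]
    linarith [hzA.2]
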